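/- Let n ≥ 2, H < 0, and let (r, θ, α) be a monotone maximal solution on (0, s∗) of the CMC profile ODE system with initial value r₀. Then s∗ < 3√2·π/4. -/

import Mathlib

open Real Set

/-- The inverse cotangent, with values in `(0, π)`. -/
noncomputable def arccot (x : ℝ) : ℝ := Real.pi / 2 - Real.arctan x

/-- Right-hand side of the `α`-equation of the CMC profile ODE system:
`α̇ = (2n−2)·cot(2θ)·cos α / sin r − (2n−1)·cot r · sin α + H`. -/
noncomputable def alphaRHS (n : ℕ) (H rv θv αv : ℝ) : ℝ :=
  (2 * (n : ℝ) - 2) * (Real.cos (2 * θv) / Real.sin (2 * θv)) * Real.cos αv / Real.sin rv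
    - (2 * (n : ℝ) - 1) * (Real.cos rv / Real.sin rv) * Real.sin αv + H

/-- `(r, θ, α)` is a solution of the CMC profile ODE system on the set `I`:
the three functions are differentiable on `I`, `sin (r s) ≠ 0` and `sin (2 θ s) ≠ 0`
on `I`, and the equations `ṙ = cos α`, `θ̇ = sin α / sin r`,
`α̇ = (2n−2)·cot(2θ)·cos α / sin r − (2n−1)·cot r·sin α + H` hold at every `s ∈ I`. -/
def IsCMCSolutionOn (n : ℕ) (H : ℝ) (r θ α : ℝ → ℝ) (I : Set ℝ) : Prop :=
  ∀ s ∈ I,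
    Real.sin (r s) ≠ 0 ∧ Real.sin (2 * θ s) ≠ 0 ∧
    HasDerivWithinAt r (Real.cos (α s)) I s ∧
    HasDerivWithinAt θ (Real.sin (α s) / Real.sin (r s)) I s ∧
    HasDerivWithinAt α (alphaRHS n H (r s) (θ s) (α s)) I s

/-- A monotone (right-)maximal solution of the CMC profile ODE system on `(0, s∗)`
with initial value `r₀ ∈ (0, arccot((−H)/(2n−1)))`: a triple `(r, θ, α)` of `C¹`
functions on `[0, s∗]`, `0 < s∗ < ∞`, solving the system on `(0, s∗)`, with
`(r, θ, α)(0) = (r₀, π/4, −π/2)`, values in `(0, π/2) × (0, π/4) × (−π/2, 0)` on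
`(0, s∗)`, `α̇ > 0` on `(0, s∗)`, `θ(s∗) > 0`, and at the endpoint
`r(s∗) = π/2` or `α(s∗) = 0` or `α̇(s∗) = 0`. -/
structure IsMonotoneMaximalSolution (n : ℕ) (H : ℝ) (r θ α : ℝ → ℝ) (r₀ sStar : ℝ) : Prop where
  hsStar : 0 < sStar
  hr₀ : r₀ ∈ Ioo 0 (arccot (-H / (2 * (n : ℝ) - 1)))
  hC1r : ContDiffOn ℝ 1 r (Icc 0 sStar)
  hC1θ : ContDiffOn ℝ 1 θ (Icc 0 sStar)
  hC1α : ContDiffOn ℝ 1 α (Icc 0 sStar)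
  hsol : IsCMCSolutionOn n H r θ α (Ioo 0 sStar)
  hr0 : r 0 = r₀
  hθ0 : θ 0 = Real.pi / 4
  hα0 : α 0 = -(Real.pi / 2)
  hval : ∀ s ∈ Ioo 0 sStar,
    r s ∈ Ioo 0 (Real.pi / 2) ∧ θ s ∈ Ioo 0 (Real.pi / 4) ∧ α s ∈ Ioo (-(Real.pi / 2)) 0
  hαdot : ∀ s ∈ Ioo 0 sStar, 0 < derivWithin α (Icc 0 sStar) s
  hθend : 0 < θ sStar
  hend : r sStar = Real.pi / 2 ∨ α sStar = 0 ∨ derivWithin α (Icc 0 sStar) sStar = 0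

/-- The right endpoint of a monotone maximal solution satisfies `s∗ < 3√2·π/4`. -/
theorem sStar_lt (n : ℕ) (hn : 2 ≤ n) (H : ℝ) (hH : H < 0)
    (r θ α : ℝ → ℝ) (r₀ sStar : ℝ)
    (hsol : IsMonotoneMaximalSolution n H r θ α r₀ sStar) :
    sStar < 3 * Real.sqrt 2 * Real.pi / 4 := by
  obtain ⟨hs, hr₀, hC1r, hC1θ, hC1α, hsolI, hr0, hθ0, hα0, hval, hαdot, hθend, hend⟩ := hsol
  have hIoo : Ioo (0:ℝ) sStar ⊆ Icc 0 sStar := Ioo_subset_Icc_self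
  set f : ℝ → ℝ := fun s => r s - θ s with hf
  have hderiv : ∀ s ∈ Ioo (0:ℝ) sStar,
      HasDerivAt f (Real.cos (α s) - Real.sin (α s) / Real.sin (r s)) s := by
    intro s hs'
    obtain ⟨_, _, hr', hθ', _⟩ := hsolI s hs'
    have hmem : Ioo (0:ℝ) sStar ∈ nhds s := isOpen_Ioo.mem_nhds hs'
    exact (hr'.hasDerivAt hmem).sub (hθ'.hasDerivAt hmem)
  have hd1 : ∀ s ∈ interior (Icc (0:ℝ) sStar), (1:ℝ) ≤ deriv f s := by
    rw [interior_Icc]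
    intro s hs'
    rw [(hderiv s hs').deriv]
    obtain ⟨hrI, hθI, hαI⟩ := hval s hs'
    have hsinr : 0 < Real.sin (r s) :=
      Real.sin_pos_of_pos_of_lt_pi hrI.1 (by linarith [Real.pi_pos, hrI.2])
    have hsinr1 : Real.sin (r s) ≤ 1 := Real.sin_le_one _
    have hcos : 0 ≤ Real.cos (α s) :=
      Real.cos_nonneg_of_mem_Icc ⟨hαI.1.le, by linarith [Real.pi_pos, hαI.2]⟩
    have hcos1 : Real.cos (α s) ≤ 1 := Real.cos_le_one _
    have hsina : Real.sin (α s) < 0 :=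
      Real.sin_neg_of_neg_of_neg_pi_lt hαI.2 (by linarith [Real.pi_pos, hαI.1])
    have hsina1 : -1 ≤ Real.sin (α s) := Real.neg_one_le_sin _
    have hkey : Real.sin (α s) / Real.sin (r s) ≤ Real.sin (α s) := by
      rw [div_le_iff₀ hsinr]; nlinarith
    nlinarith [Real.sin_sq_add_cos_sq (α s)]
  have hmvt := (convex_Icc (0:ℝ) sStar).mul_sub_le_image_sub_of_le_deriv
      (hC1r.continuousOn.sub hC1θ.continuousOn)
      (by
        rw [interior_Icc]
        exact fun s hs' => (hderiv s hs').differentiableAt.differentiableWithinAt)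
      hd1 0 (left_mem_Icc.mpr hs.le) sStar (right_mem_Icc.mpr hs.le) hs.le
  have hrend : r sStar ≤ Real.pi / 2 := by
    have hc : ContinuousWithinAt r (Icc 0 sStar) sStar :=
      hC1r.continuousOn sStar (right_mem_Icc.mpr hs.le)
    have ht : Filter.Tendsto r (nhdsWithin sStar (Ioo 0 sStar)) (nhds (r sStar)) :=
      hc.mono_left (nhdsWithin_mono _ hIoo)
    have : Filter.NeBot (nhdsWithin sStar (Ioo (0:ℝ) sStar)) := right_nhdsWithin_Ioo_neBot hs
    exact le_of_tendsto ht
      (Filter.eventually_iff_exists_mem.mpr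
        ⟨Ioo 0 sStar, self_mem_nhdsWithin, fun s hs' => (hval s hs').1.2.le⟩)
  have hsqrt : (1:ℝ) < Real.sqrt 2 := by
    nlinarith [Real.sq_sqrt (show (0:ℝ) ≤ 2 by norm_num), Real.sqrt_nonneg 2]
  have hr0' : 0 < r₀ := hr₀.1
  have hf0 : f 0 = r₀ - Real.pi / 4 := by simp [hf, hr0, hθ0]
  have hfS : f sStar = r sStar - θ sStar := rfl
  have hpi := Real.pi_pos
  simp only [Pi.sub_apply] at hmvt
  nlinarith [hmvt]
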